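/- Let β : ℝ → ℝ be a bump function. Then there is no constant c > 0 such that sup_{t∈ℝ} |β^{(n)}(t)| ≤ c^n·n! for every n ∈ ℕ. (Indeed, for every n and every t ∈ (0,1), |β(t)| ≤ (sup_ℝ |β^{(n)}|)·t^n/n!, so such a c would force β to vanish on [0, 1/c], contradicting that β is strictly increasing on [0,1].) -/

import Mathlib

open Real Set

/-- Remark after Proposition 3.3: for a bump function `β` (a `C^∞` function
which is `0` on `(-∞,0]`, strictly increasing on `[0,1]`, and `1` on `[1,∞)`)
there is no constant `c > 0` with `sup_t |β⁽ⁿ⁾(t)| ≤ c^n·n!` for all `n`. -/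
theorem bump_function_no_factorial_bound
    (β : ℝ → ℝ) (hβ : ContDiff ℝ (⊤ : ℕ∞) β)
    (h0 : ∀ t : ℝ, t ≤ 0 → β t = 0)
    (hmono : StrictMonoOn β (Icc 0 1))
    (h1 : ∀ t : ℝ, 1 ≤ t → β t = 1) :
    ¬ ∃ c : ℝ, 0 < c ∧ ∀ n : ℕ, ∀ t : ℝ,
        |iteratedDeriv n β t| ≤ c ^ n * (n.factorial : ℝ) := by
  rintro ⟨c, hc, hbound⟩
  have hdiff : ∀ k : ℕ, Differentiable ℝ (iteratedDeriv k β) := by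
    intro k
    exact hβ.differentiable_iteratedDeriv k
      (by exact_mod_cast lt_top_iff_ne_top.mpr (ENat.coe_ne_top k))
  -- Step 1: all iterated derivatives vanish on (-∞, 0]
  have hder0 : ∀ n : ℕ, ∀ t : ℝ, t ≤ 0 → iteratedDeriv n β t = 0 := by
    intro n
    induction n with
    | zero => simpa using h0
    | succ k ih =>
      have hin : ∀ s : ℝ, s < 0 → iteratedDeriv (k + 1) β s = 0 := by
        intro s hs
        rw [iteratedDeriv_succ]
        have he : iteratedDeriv k β =ᶠ[nhds s] fun _ => (0 : ℝ) := by
          filter_upwards [Iio_mem_nhds hs] with x hx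
          exact ih x (le_of_lt hx)
        rw [he.deriv_eq]
        simp
      intro t ht
      rcases lt_or_eq_of_le ht with h | h
      · exact hin t h
      · subst h
        have hcont : Continuous (iteratedDeriv (k + 1) β) :=
          hβ.continuous_iteratedDeriv _ (by exact_mod_cast le_top)
        have h1' : Filter.Tendsto (iteratedDeriv (k + 1) β) (nhdsWithin 0 (Iio 0))
            (nhds (iteratedDeriv (k + 1) β 0)) :=
          (hcont.tendsto 0).mono_left nhdsWithin_le_nhds
        have h2' : Filter.Tendsto (iteratedDeriv (k + 1) β) (nhdsWithin 0 (Iio 0))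
            (nhds 0) := by
          apply Filter.Tendsto.congr' _ tendsto_const_nhds
          filter_upwards [self_mem_nhdsWithin] with x hx
          exact (hin x hx).symm
        exact tendsto_nhds_unique h1' h2'
  -- choose t
  set t : ℝ := min (1 / (2 * c)) 1 with htdef
  have ht0 : (0 : ℝ) < t := lt_min (by positivity) one_pos
  have ht1 : t ≤ 1 := min_le_right _ _
  have hct : c * t ≤ 1 / 2 := by
    have : t ≤ 1 / (2 * c) := min_le_left _ _
    calc c * t ≤ c * (1 / (2 * c)) := by nlinarith
    _ = 1 / 2 := by field_simp
  have hct0 : 0 ≤ c * t := by positivity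
  have hud : UniqueDiffOn ℝ (Icc (0 : ℝ) t) := uniqueDiffOn_Icc ht0
  -- iteratedDerivWithin = iteratedDeriv on Icc 0 t
  have heq : ∀ n : ℕ, ∀ x ∈ Icc (0 : ℝ) t,
      iteratedDerivWithin n β (Icc 0 t) x = iteratedDeriv n β x := by
    intro n
    induction n with
    | zero => intro x _; simp
    | succ k ih =>
      intro x hx
      rw [iteratedDerivWithin_succ, iteratedDeriv_succ,
        derivWithin_congr ih (ih x hx)]
      exact ((hdiff k).differentiableAt).derivWithin (hud x hx)
  -- β t > 0
  have hβt : 0 < β t := by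
    have := hmono (left_mem_Icc.2 zero_le_one) ⟨le_of_lt ht0, ht1⟩ ht0
    rwa [h0 0 le_rfl] at this
  -- Taylor bound: |β t| ≤ (c*t)^(n+1) for all n
  have key : ∀ n : ℕ, |β t| ≤ (c * t) ^ (n + 1) := by
    intro n
    have hcd : ContDiffOn ℝ n β (Icc 0 t) := (hβ.of_le (by exact_mod_cast le_top)).contDiffOn
    have hdo : DifferentiableOn ℝ (iteratedDerivWithin n β (Icc 0 t)) (Ioo 0 t) := by
      apply DifferentiableOn.congr ((hdiff n).differentiableOn)
      intro x hx
      exact heq n x (Ioo_subset_Icc_self hx)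
    obtain ⟨x', hx', htaylor⟩ := taylor_mean_remainder_lagrange (ne_of_lt ht0)
      (by rwa [uIcc_of_le ht0.le]) (by rwa [uIcc_of_le ht0.le, uIoo_of_le ht0.le])
    rw [uIcc_of_le ht0.le] at htaylor
    rw [uIoo_of_le ht0.le] at hx'
    have hpoly : taylorWithinEval β n (Icc 0 t) 0 t = 0 := by
      rw [taylor_within_apply]
      apply Finset.sum_eq_zero
      intro k _
      rw [heq k 0 (left_mem_Icc.2 (le_of_lt ht0)), hder0 k 0 le_rfl]
      simp
    rw [hpoly, sub_zero, heq (n + 1) x' (Ioo_subset_Icc_self hx'), sub_zero] at htaylor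
    rw [htaylor]
    have hb := hbound (n + 1) x'
    have hfac : (0 : ℝ) < ((n + 1).factorial : ℝ) := by positivity
    rw [abs_div, abs_mul, abs_pow]
    have htabs : |t| = t := abs_of_pos ht0
    rw [htabs, abs_of_pos hfac]
    rw [div_le_iff₀ hfac]
    calc |iteratedDeriv (n + 1) β x'| * t ^ (n + 1)
        ≤ (c ^ (n + 1) * ((n + 1).factorial : ℝ)) * t ^ (n + 1) := by
          apply mul_le_mul_of_nonneg_right hb (by positivity)
      _ = (c * t) ^ (n + 1) * ((n + 1).factorial : ℝ) := by ring
  -- contradiction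
  obtain ⟨n, hn⟩ := exists_pow_lt_of_lt_one hβt (lt_of_le_of_lt hct (by norm_num))
  have h1n : (c * t) ^ (n + 1) ≤ (c * t) ^ n :=
    pow_le_pow_of_le_one hct0 (le_trans hct (by norm_num)) (Nat.le_succ n)
  have := key n
  rw [abs_of_pos hβt] at this
  linarith
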